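/- Let H be a simple graph and let t be a nonnegative integer such that the maximum degree of H is at least t. Then the number of triangles of H satisfies △(H) ≤ ((|E(H)| − t)/6)·(3 + √(8(|E(H)| − t) + 1)), where the square root is the real square root. -/

import Mathlib

open Finset

variable {V : Type*}

/-- The number of proper colorings of `G` using the colors `{1, …, k}`. -/
noncomputable def propCol (G : SimpleGraph V) (k : ℕ) : ℕ :=
  Set.ncard {f : V → ℕ | (∀ v, f v ∈ Finset.Icc 1 k) ∧ ∀ ⦃a b : V⦄, G.Adj a b → f a ≠ f b}

/-- The number of `L`-colorings of `G`, for an assignment `L` of color lists. -/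
noncomputable def listCol (G : SimpleGraph V) (L : V → Finset ℕ) : ℕ :=
  Set.ncard {f : V → ℕ | (∀ v, f v ∈ L v) ∧ ∀ ⦃a b : V⦄, G.Adj a b → f a ≠ f b}

/-- `α(uv) = |L(u) \ L(v)|`, symmetrized (when `|L(u)| = |L(v)|` one has
`|L(u) \ L(v)| = |L(v) \ L(u)|`, so this is exactly `|L(u) \ L(v)|`). -/
noncomputable def alphaL (L : V → Finset ℕ) : Sym2 V → ℕ :=
  Sym2.lift ⟨fun a b => ((L a) \ (L b)).card ⊔ ((L b) \ (L a)).card,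
    fun a b => by simp [sup_comm]⟩

/-- `B` is the edge set of a broken cycle of `G` with respect to the edge ordering `η`:
the edge set of a path `v₁v₂⋯v_r` of `G` with `r ≥ 3` such that `v₁v_r ∈ E(G)` and
`η(v₁v_r) < η(v_iv_{i+1})` for each `i`. -/
def IsBrokenCycle [DecidableEq V] (G : SimpleGraph V) (η : Sym2 V → ℕ)
    (B : Finset (Sym2 V)) : Prop :=
  ∃ (u w : V) (p : G.Walk u w), p.IsPath ∧ 2 ≤ p.length ∧ G.Adj u w ∧
    (∀ f ∈ p.edges, η s(u, w) < η f) ∧ B = p.edges.toFinset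

/-- `NB_i(G)`: the collection of `i`-element subsets of `E(G)` containing no broken cycle. -/
def NBset [DecidableEq V] (G : SimpleGraph V) (η : Sym2 V → ℕ) (i : ℕ) :
    Set (Finset (Sym2 V)) :=
  {A : Finset (Sym2 V) | ↑A ⊆ G.edgeSet ∧ A.card = i ∧
    ∀ B : Finset (Sym2 V), IsBrokenCycle G η B → ¬ B ⊆ A}

/-- `|NB_i(G)|`. -/
noncomputable def NBcard [DecidableEq V] (G : SimpleGraph V) (η : Sym2 V → ℕ) (i : ℕ) : ℕ :=
  Set.ncard (NBset G η i)

/-- `|NB_i(G, e)|`: the number of `i`-element subsets of `E(G)` that contain `e`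
and contain no broken cycle. -/
noncomputable def NBe [DecidableEq V] (G : SimpleGraph V) (η : Sym2 V → ℕ)
    (i : ℕ) (e : Sym2 V) : ℕ :=
  Set.ncard {A : Finset (Sym2 V) | A ∈ NBset G η i ∧ e ∈ A}

/-- `Q_η(G, e, x)`, where `n` is the number of vertices of `G`. -/
noncomputable def Qeta [DecidableEq V] [Fintype V] (G : SimpleGraph V)
    (η : Sym2 V → ℕ) (e : Sym2 V) (x : ℝ) : ℝ :=
  (∑ i ∈ (Finset.Icc 1 (Fintype.card V - 1)).filter (fun i => Odd i),
      (NBe G η i e : ℝ) / i * x ^ (Fintype.card V - i)) -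
  ∑ i ∈ (Finset.Icc 2 (Fintype.card V - 1)).filter (fun i => Even i),
      (NBe G η i e : ℝ) * x ^ (Fintype.card V - i)

/-- The contraction `G/e` of the edge `e = uv`: the vertex `v` is merged into `u`
(so `v` becomes an isolated vertex), loops are removed and parallel edges are merged. -/
def contractE (G : SimpleGraph V) (u v : V) : SimpleGraph V :=
  SimpleGraph.fromRel (fun a b =>
    (G.Adj a b ∧ a ≠ v ∧ b ≠ v) ∨ (a = u ∧ b ≠ v ∧ G.Adj v b))

/-- The number of triangles (3-cliques) of `H`. -/
noncomputable def triangleCount (H : SimpleGraph V) : ℕ :=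
  Set.ncard {s : Finset V | H.IsNClique 3 s}

/-- `|NB₂(H)| = C(|E(H)|, 2) − △(H)`: the number of 2-element subsets of `E(H)`
containing no broken cycle (this count is independent of the edge ordering). -/
noncomputable def NB2 (H : SimpleGraph V) : ℕ :=
  Nat.choose (H.edgeSet.ncard) 2 - triangleCount H

/-- `C` is the edge set of a 4-cycle of `G`. -/
def IsFourCycle [DecidableEq V] (G : SimpleGraph V) (C : Finset (Sym2 V)) : Prop :=
  ∃ (u : V) (p : G.Walk u u), p.IsCycle ∧ p.length = 4 ∧ C = p.edges.toFinset

/-- The number of 4-cycles of `G` containing the edge `e`. -/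
noncomputable def fourCyclesOn [DecidableEq V] (G : SimpleGraph V) (e : Sym2 V) : ℕ :=
  Set.ncard {C : Finset (Sym2 V) | IsFourCycle G C ∧ e ∈ C}

/-- `c₄(G)`: the maximum over edges `e` of the number of 4-cycles of `G` containing `e`,
i.e. the least `r` such that every edge lies in at most `r` 4-cycles. -/
noncomputable def c4 [DecidableEq V] (G : SimpleGraph V) : ℕ :=
  sSup {r : ℕ | ∃ e ∈ G.edgeSet, r = fourCyclesOn G e}

/-- `β(T)` for the connected component `c` of `H`: the number of colors lying in every
list `L w` for `w` a vertex of the component `c`. -/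
noncomputable def betaComp (L : V → Finset ℕ) (H : SimpleGraph V)
    (c : H.ConnectedComponent) : ℕ :=
  Set.ncard {x : ℕ | ∀ w : V, H.connectedComponentMk w = c → x ∈ L w}

/-- `∏_j β(T_j)` over the connected components `T_j` of the spanning subgraph `H`. -/
noncomputable def betaProd (L : V → Finset ℕ) (H : SimpleGraph V) : ℕ :=
  ∏ᶠ c : H.ConnectedComponent, betaComp L H c


/-- delete all edges at `v` -/
def delV (G : SimpleGraph V) (v : V) : SimpleGraph V where
  Adj a b := G.Adj a b ∧ a ≠ v ∧ b ≠ v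
  symm := ⟨fun a b ⟨h, ha, hb⟩ => ⟨h.symm, hb, ha⟩⟩
  loopless := ⟨fun a ⟨h, _, _⟩ => G.loopless.irrefl a h⟩

instance (G : SimpleGraph V) [DecidableRel G.Adj] [DecidableEq V] (v : V) :
    DecidableRel (delV G v).Adj := fun _ _ => instDecidableAnd

lemma delV_le (G : SimpleGraph V) (v : V) : delV G v ≤ G := fun _ _ h => h.1

lemma delV_edgeSet (G : SimpleGraph V) (v : V) (e : Sym2 V) :
    e ∈ (delV G v).edgeSet ↔ e ∈ G.edgeSet ∧ v ∉ e := by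
  induction e using Sym2.ind with
  | _ a b =>
    simp only [SimpleGraph.mem_edgeSet, Sym2.mem_iff]
    constructor
    · rintro ⟨h, ha, hb⟩; exact ⟨h, by tauto⟩
    · rintro ⟨h, hv⟩; exact ⟨h, by tauto⟩

lemma delV_edgeFinset [Fintype V] [DecidableEq V] (G : SimpleGraph V) [DecidableRel G.Adj]
    (v : V) : (delV G v).edgeFinset = G.edgeFinset \ G.incidenceFinset v := by
  ext e
  simp only [SimpleGraph.mem_edgeFinset, mem_sdiff, SimpleGraph.mem_incidenceFinset,
    delV_edgeSet, SimpleGraph.incidenceSet]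
  constructor
  · rintro ⟨h, hv⟩; exact ⟨h, by simp [Set.mem_setOf_eq]; tauto⟩
  · rintro ⟨h, hv⟩; refine ⟨h, fun hve => hv ?_⟩; exact ⟨h, hve⟩

lemma delV_card_edgeFinset [Fintype V] [DecidableEq V] (G : SimpleGraph V) [DecidableRel G.Adj]
    (v : V) : ((delV G v).edgeFinset).card = G.edgeFinset.card - G.degree v := by
  have inc : G.incidenceFinset v ⊆ G.edgeFinset := by
    simp [SimpleGraph.incidenceFinset, SimpleGraph.incidenceSet_subset]
  rw [delV_edgeFinset, card_sdiff_of_subset inc, SimpleGraph.card_incidenceFinset_eq_degree]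

lemma degree_le_card_edgeFinset [Fintype V] [DecidableEq V] (G : SimpleGraph V)
    [DecidableRel G.Adj] (v : V) : G.degree v ≤ G.edgeFinset.card := by
  have inc : G.incidenceFinset v ⊆ G.edgeFinset := by
    simp [SimpleGraph.incidenceFinset, SimpleGraph.incidenceSet_subset]
  rw [← SimpleGraph.card_incidenceFinset_eq_degree]
  exact card_le_card inc

/-- Finset pair as a `Sym2`. -/
def toF [DecidableEq V] : Sym2 V → Finset V :=
  Sym2.lift ⟨fun a b => ({a, b} : Finset V), fun a b => by
    simp [Finset.pair_comm]⟩

section Tri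
variable [Fintype V] [DecidableEq V] (G : SimpleGraph V) [DecidableRel G.Adj] (v : V)

lemma tri_decomp :
    (G.cliqueFinset 3).card
      = ((G.cliqueFinset 3).filter (v ∈ ·)).card + ((delV G v).cliqueFinset 3).card := by
  have hsplit := card_filter_add_card_filter_not (s := G.cliqueFinset 3) (p := (v ∈ ·))
  have heq : (G.cliqueFinset 3).filter (fun a => v ∉ a) = (delV G v).cliqueFinset 3 := by
    ext s
    simp only [mem_filter, SimpleGraph.mem_cliqueFinset_iff]
    constructor
    · rintro ⟨⟨hs1, hs2⟩, hv⟩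
      exact ⟨fun x hx y hy hxy => ⟨hs1 hx hy hxy, fun h => hv (h ▸ hx), fun h => hv (h ▸ hy)⟩, hs2⟩
    · rintro ⟨hs, hcard⟩
      refine ⟨⟨fun x hx y hy hxy => (hs hx hy hxy).1, hcard⟩, fun hv => ?_⟩
      obtain ⟨u, hu, hune⟩ := Finset.exists_mem_ne (by omega : 1 < s.card) v
      exact (hs hu hv hune).2.2 rfl
  rw [heq] at hsplit
  omega

lemma triv_le_edge :
    ((G.cliqueFinset 3).filter (v ∈ ·)).card ≤ ((delV G v).edgeFinset).card := by
  have h1 : ((G.cliqueFinset 3).filter (v ∈ ·)).card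
      ≤ (((delV G v).edgeFinset).image toF).card := by
    apply card_le_card_of_injOn (fun s => s.erase v)
    · intro s hs
      rw [mem_coe, mem_filter, SimpleGraph.mem_cliqueFinset_iff] at hs
      obtain ⟨⟨hcl, hcard⟩, hv⟩ := hs
      have h2 : (s.erase v).card = 2 := by rw [card_erase_of_mem hv, hcard]
      obtain ⟨x, y, hxy, hxyeq⟩ := Finset.card_eq_two.1 h2
      have hx : x ∈ s.erase v := by rw [hxyeq]; simp
      have hy : y ∈ s.erase v := by rw [hxyeq]; simp
      have hxv := Finset.ne_of_mem_erase hx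
      have hyv := Finset.ne_of_mem_erase hy
      have hadj : (delV G v).Adj x y :=
        ⟨hcl (Finset.mem_of_mem_erase hx) (Finset.mem_of_mem_erase hy) hxy, hxv, hyv⟩
      refine Finset.mem_image.2 ⟨s(x, y), ?_, ?_⟩
      · rwa [SimpleGraph.mem_edgeFinset, SimpleGraph.mem_edgeSet]
      · show toF s(x, y) = s.erase v
        rw [hxyeq]; simp [toF]
    · intro s hs t ht hst
      rw [coe_filter] at hs ht
      simp only [Set.mem_setOf_eq] at hs ht
      have := congrArg (insert v) hst
      rwa [Finset.insert_erase hs.2, Finset.insert_erase ht.2] at this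
  exact h1.trans (card_image_le)

lemma triv_le_choose :
    ((G.cliqueFinset 3).filter (v ∈ ·)).card ≤ (G.degree v).choose 2 := by
  have h1 : ((G.cliqueFinset 3).filter (v ∈ ·)).card
      ≤ (Finset.powersetCard 2 (G.neighborFinset v)).card := by
    apply card_le_card_of_injOn (fun s => s.erase v)
    · intro s hs
      rw [mem_coe, mem_filter, SimpleGraph.mem_cliqueFinset_iff] at hs
      obtain ⟨⟨hcl, hcard⟩, hv⟩ := hs
      have h2 : (s.erase v).card = 2 := by rw [card_erase_of_mem hv, hcard]
      refine Finset.mem_powersetCard.2 ⟨fun x hx => ?_, h2⟩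
      have hxv := Finset.ne_of_mem_erase hx
      rw [SimpleGraph.mem_neighborFinset]
      exact hcl hv (Finset.mem_of_mem_erase hx) (Ne.symm hxv)
    · intro s hs t ht hst
      rw [coe_filter] at hs ht
      simp only [Set.mem_setOf_eq] at hs ht
      have := congrArg (insert v) hst
      rwa [Finset.insert_erase hs.2, Finset.insert_erase ht.2] at this
  rwa [Finset.card_powersetCard, SimpleGraph.card_neighborFinset_eq_degree] at h1

end Tri


noncomputable def fR (s : ℝ) : ℝ := s * (Real.sqrt (8*s+1) - 3) / 6

noncomputable def gR (s : ℝ) : ℝ := s * (3 + Real.sqrt (8*s+1)) / 6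

lemma fR_zero : fR 0 = 0 := by simp [fR]

lemma self_add_fR (s : ℝ) : s + fR s = gR s := by unfold fR gR; ring

lemma gR_mono {x y : ℝ} (hx : 0 ≤ x) (hxy : x ≤ y) : gR x ≤ gR y := by
  unfold gR
  have h1 : Real.sqrt (8*x+1) ≤ Real.sqrt (8*y+1) := by
    apply Real.sqrt_le_sqrt; linarith
  have h2 : (0:ℝ) ≤ 3 + Real.sqrt (8*x+1) := by positivity
  have h3 : x * (3 + Real.sqrt (8*x+1)) ≤ y * (3 + Real.sqrt (8*y+1)) :=
    mul_le_mul hxy (by linarith) h2 (by linarith)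
  linarith

lemma keyLemma (d s : ℝ) (hd : 1 ≤ d) (hs : 0 ≤ s) :
    min (d*(d-1)/2) s + fR s ≤ fR (s + d) := by
  set a := Real.sqrt (8*s+1) with ha_def
  set b := Real.sqrt (8*(s+d)+1) with hb_def
  have ha2 : a^2 = 8*s+1 := Real.sq_sqrt (by linarith)
  have hb2 : b^2 = 8*(s+d)+1 := Real.sq_sqrt (by linarith)
  have ha0 : 0 ≤ a := Real.sqrt_nonneg _
  have hb0 : 0 ≤ b := Real.sqrt_nonneg _
  have ha1 : 1 ≤ a := by
    have h := Real.sqrt_le_sqrt (show (1:ℝ) ≤ 8*s+1 by linarith)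
    simpa [ha_def] using h
  have hab : a ≤ b := by
    apply Real.sqrt_le_sqrt; linarith
  unfold fR
  rcases le_or_gt (2*d - 1) a with hcase | hcase
  · -- small d : use the d*(d-1)/2 branch ; here b ≤ a + 2
    have hble : b ≤ a + 2 := by
      have : b^2 ≤ (a+2)^2 := by nlinarith
      nlinarith [sq_nonneg (b - (a+2))]
    have hmin : min (d*(d-1)/2) s ≤ d*(d-1)/2 := min_le_left _ _
    have key : 3*d^2 ≤ (s+d)*b - s*a := by
      nlinarith [mul_nonneg (mul_nonneg (sub_nonneg.2 hab) (sub_nonneg.2 hble))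
        (by nlinarith : (0:ℝ) ≤ 3*(b-a)^2 + (12*a-2)*(b-a) + (12*a^2-4)),
        sq_nonneg (b-a), sq_nonneg (a+b)]
    calc min (d*(d-1)/2) s + s * (a - 3) / 6 ≤ d*(d-1)/2 + s * (a-3)/6 := by linarith
      _ ≤ (s+d) * (b-3)/6 := by nlinarith
  · -- large d : use the s branch ; here a + 2 ≤ b
    have hble : a + 2 ≤ b := by
      have h1 : (a+2)^2 ≤ b^2 := by nlinarith
      nlinarith [sq_nonneg (b + (a+2))]
    have hmin : min (d*(d-1)/2) s ≤ s := min_le_right _ _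
    have key : s * (a+3) ≤ (s+d)*(b-3) := by
      nlinarith [mul_nonneg (by linarith : (0:ℝ) ≤ s + d) (by linarith : (0:ℝ) ≤ b - (a+2)),
        mul_nonneg (by linarith : (0:ℝ) ≤ 2*d - (a+1)) (by linarith : (0:ℝ) ≤ a - 1)]
    calc min (d*(d-1)/2) s + s * (a-3)/6 ≤ s + s*(a-3)/6 := by linarith
      _ = s * (a+3)/6 := by ring
      _ ≤ (s+d)*(b-3)/6 := by linarith

lemma tri_le [Fintype V] [DecidableEq V] :
    ∀ (m : ℕ) (G : SimpleGraph V) [DecidableRel G.Adj], G.edgeFinset.card = m →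
      ((G.cliqueFinset 3).card : ℝ) ≤ fR m := by
  intro m
  induction m using Nat.strong_induction_on with
  | _ m IH =>
    intro G _ hm
    rcases Nat.eq_zero_or_pos m with h0 | hpos
    · subst h0
      have hempty : G.cliqueFinset 3 = ∅ := by
        rw [Finset.eq_empty_iff_forall_notMem]
        intro s hs
        rw [SimpleGraph.mem_cliqueFinset_iff, SimpleGraph.is3Clique_iff] at hs
        obtain ⟨a, b, c, hab, -, -, -⟩ := hs
        have hmem : s(a,b) ∈ G.edgeFinset := by
          rwa [SimpleGraph.mem_edgeFinset, SimpleGraph.mem_edgeSet]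
        have := Finset.card_pos.2 ⟨_, hmem⟩
        omega
      rw [hempty]
      simp [fR]
    · obtain ⟨e, he⟩ := Finset.card_pos.1 (show 0 < G.edgeFinset.card by omega)
      induction e using Sym2.ind with
      | _ x y =>
      rw [SimpleGraph.mem_edgeFinset, SimpleGraph.mem_edgeSet] at he
      have hdeg : 1 ≤ G.degree x := by
        rw [← SimpleGraph.card_neighborFinset_eq_degree]
        exact Finset.card_pos.2 ⟨y, (SimpleGraph.mem_neighborFinset G x y).2 he⟩
      have hd_le : G.degree x ≤ m := hm ▸ degree_le_card_edgeFinset G x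
      set d := G.degree x with hd
      set s' := m - d with hs'
      have hcard' : (delV G x).edgeFinset.card = s' := by
        rw [delV_card_edgeFinset, hm]
      have hlt : s' < m := by omega
      have hIH := IH s' hlt (delV G x) hcard'
      have hdec := tri_decomp G x
      have h1 := triv_le_edge G x
      have h2 := triv_le_choose G x
      rw [hcard'] at h1
      have key := keyLemma (d : ℝ) (s' : ℝ) (by exact_mod_cast hdeg) (by positivity)
      have hchoose : ((d.choose 2 : ℕ) : ℝ) = (d : ℝ) * ((d : ℝ) - 1) / 2 :=
        Nat.cast_choose_two (K := ℝ) d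
      have hmin : (((G.cliqueFinset 3).filter (x ∈ ·)).card : ℝ)
          ≤ min ((d : ℝ) * ((d : ℝ) - 1) / 2) (s' : ℝ) := by
        rw [le_min_iff]
        constructor
        · rw [← hchoose]; exact_mod_cast h2
        · exact_mod_cast h1
      have hsum : ((s' : ℝ) + (d : ℝ)) = (m : ℝ) := by
        have : s' + d = m := by omega
        exact_mod_cast this
      calc ((G.cliqueFinset 3).card : ℝ)
          = (((G.cliqueFinset 3).filter (x ∈ ·)).card : ℝ)
            + (((delV G x).cliqueFinset 3).card : ℝ) := by exact_mod_cast hdec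
        _ ≤ min ((d : ℝ) * ((d : ℝ) - 1) / 2) (s' : ℝ) + fR s' := add_le_add hmin hIH
        _ ≤ fR ((s' : ℝ) + (d : ℝ)) := key
        _ = fR m := by rw [hsum]

theorem stmt13' [Fintype V] [DecidableEq V] (H : SimpleGraph V) [DecidableRel H.Adj]
    (t : ℕ) (ht : t ≤ H.maxDegree) :
    (((H.cliqueFinset 3).card : ℕ) : ℝ) ≤
      ((H.edgeFinset.card : ℝ) - t) / 6 *
        (3 + Real.sqrt (8 * ((H.edgeFinset.card : ℝ) - t) + 1)) := by
  have hRHS : ((H.edgeFinset.card : ℝ) - t) / 6 *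
        (3 + Real.sqrt (8 * ((H.edgeFinset.card : ℝ) - t) + 1))
      = gR ((H.edgeFinset.card : ℝ) - t) := by unfold gR; ring
  rw [hRHS]
  cases isEmpty_or_nonempty V with
  | inl hE =>
    have ht0 : t = 0 := by
      have hmd : H.maxDegree = 0 := by simp [SimpleGraph.maxDegree]
      omega
    have hc : H.cliqueFinset 3 = ∅ := by
      rw [Finset.eq_empty_iff_forall_notMem]
      intro s hs
      rw [SimpleGraph.mem_cliqueFinset_iff] at hs
      have h3 := hs.2
      rw [Finset.eq_empty_of_isEmpty s] at h3
      simp at h3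
    have hm : H.edgeFinset.card = 0 := by
      simp [Finset.eq_empty_of_isEmpty H.edgeFinset]
    rw [hc, ht0, hm]
    norm_num [gR]
  | inr hN =>
    obtain ⟨v, hv⟩ := H.exists_maximal_degree_vertex
    have htd : t ≤ H.degree v := hv ▸ ht
    have hd_le : H.degree v ≤ H.edgeFinset.card := degree_le_card_edgeFinset H v
    set m := H.edgeFinset.card with hm
    set d := H.degree v with hd
    set s' := m - d with hs'
    have hcard' : (delV H v).edgeFinset.card = s' := delV_card_edgeFinset H v
    have hIH := tri_le s' (delV H v) hcard'
    have hdec := tri_decomp H v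
    have h1 := triv_le_edge H v
    rw [hcard'] at h1
    have hs'cast : (s' : ℝ) = (m : ℝ) - d := by
      have hsd : s' + d = m := by omega
      have := congrArg (Nat.cast (R := ℝ)) hsd
      push_cast at this
      linarith
    have hle : ((H.cliqueFinset 3).card : ℝ) ≤ (s' : ℝ) + fR s' := by
      calc ((H.cliqueFinset 3).card : ℝ)
          = (((H.cliqueFinset 3).filter (v ∈ ·)).card : ℝ)
            + (((delV H v).cliqueFinset 3).card : ℝ) := by exact_mod_cast hdec
        _ ≤ (s' : ℝ) + fR s' := add_le_add (by exact_mod_cast h1) hIH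
    rw [self_add_fR] at hle
    refine hle.trans (gR_mono (by positivity) ?_)
    rw [hs'cast]
    have htd' : (t : ℝ) ≤ (d : ℝ) := by exact_mod_cast htd
    linarith

theorem stmt13 [Fintype V] [DecidableEq V] (H : SimpleGraph V) [DecidableRel H.Adj]
    (t : ℕ) (ht : t ≤ H.maxDegree) :
    (triangleCount H : ℝ) ≤
      ((H.edgeFinset.card : ℝ) - t) / 6 *
        (3 + Real.sqrt (8 * ((H.edgeFinset.card : ℝ) - t) + 1)) := by
  have htri : triangleCount H = (H.cliqueFinset 3).card := by
    unfold triangleCount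
    rw [show {s : Finset V | H.IsNClique 3 s} = ↑(H.cliqueFinset 3) from by
      ext s; simp [SimpleGraph.mem_cliqueFinset_iff], Set.ncard_coe_finset]
  rw [htri]
  exact_mod_cast stmt13' H t ht
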